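/- arXiv:2508.20003 — 2 statements merged into one kernel-verified Lean document; each statement's English description precedes it below -/
import Mathlib

section
/- Fix positive integers M and K, complex column vectors h_1,…,h_K ∈ ℂ^M, a real constant c > 0, and target rates r_1,…,r_K > 0. Let i_1,…,i_K be a permutation of {1,…,K} and m ≤ K such that the SIC decodability condition holds for the first m users: r_{i_u} ≤ R_{i_u}^{T_u} for every u ≤ m, where T_u = {i_{u+1},…,i_K}. Let D = {i_1,…,i_m} and Ŝ = {1,…,K} ∖ D. Then D satisfies the joint-decodability (capacity-region) condition relative to the outage set Ŝ: for every subset S ⊆ D, Σ_{k∈S} r_k ≤ R_S^{Ŝ}. In particular, any set of users decodable by successive interference cancellation in some order lies in the capacity region of the corresponding multiple-access channel with the remaining users treated as interference. -/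
open Matrix BigOperators

/-- `gram h T = ∑ k ∈ T, h k (h k)^H`, the Gram (interference covariance) matrix of the
channel vectors of the users in `T`. -/
noncomputable def gram {M K : ℕ} (h : Fin K → Fin M → ℂ)
    (T : Finset (Fin K)) : Matrix (Fin M) (Fin M) ℂ :=
  ∑ k ∈ T, Matrix.vecMulVec (h k) (star (h k))

/-- Achievable (sum) rate of the user group `S` under interference from the user group `T`:
`R_S^T = log₂ (det (I + c (G_S + G_T)) / det (I + c G_T))`, both determinants being
positive reals (as determinants of `I` plus a positive semidefinite Hermitian matrix). -/
noncomputable def rate {M K : ℕ} (h : Fin K → Fin M → ℂ) (c : ℝ)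
    (S T : Finset (Fin K)) : ℝ :=
  Real.logb 2
    (((1 + (c : ℂ) • (gram h S + gram h T)).det).re /
      ((1 + (c : ℂ) • gram h T).det).re)

open scoped ComplexOrder

section Aux
variable {n : Type*} [Fintype n] [DecidableEq n]

lemma det_im_zero {A : Matrix n n ℂ} (hA : A.PosDef) : A.det.im = 0 :=
  ((Complex.lt_def.mp hA.det_pos).2).symm

lemma det_re_pos {A : Matrix n n ℂ} (hA : A.PosDef) : 0 < A.det.re :=
  (Complex.lt_def.mp hA.det_pos).1

lemma smul_posSemidef {t : ℝ} (ht : 0 ≤ t) {A : Matrix n n ℂ} (hA : A.PosSemidef) :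
    ((t : ℂ) • A).PosSemidef := by
  constructor
  · unfold Matrix.IsHermitian
    rw [conjTranspose_smul, hA.1]
    norm_num
  · intro x
    exact (hA.smul (show (0:ℂ) ≤ (t:ℂ) by exact_mod_cast ht)).2 x

lemma inv_quad_anti {A B : Matrix n n ℂ} (hA : A.PosDef) (hB : B.PosDef)
    (hAB : (B - A).PosSemidef) (x : n → ℂ) :
    (star x ⬝ᵥ B⁻¹ *ᵥ x).re ≤ (star x ⬝ᵥ A⁻¹ *ᵥ x).re := by
  set y := B⁻¹ *ᵥ x with hy
  set u := A⁻¹ *ᵥ x with hu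
  have hBy : B *ᵥ y = x := by
    rw [hy, mulVec_mulVec, Matrix.mul_nonsing_inv _ hB.det_pos.ne'.isUnit, one_mulVec]
  have hAu : A *ᵥ u = x := by
    rw [hu, mulVec_mulVec, Matrix.mul_nonsing_inv _ hA.det_pos.ne'.isUnit, one_mulVec]
  -- star u ᵥ* A = star x
  have hxA : star u ᵥ* A = star x := by
    have h0 := star_mulVec (M := A) (v := u)
    rw [hAu, hA.isHermitian.eq] at h0
    exact h0.symm
  have key : star u ⬝ᵥ x - star x ⬝ᵥ y
      = star (u - y) ⬝ᵥ A *ᵥ (u - y) + star y ⬝ᵥ (B - A) *ᵥ y := by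
    have h1 : star u ⬝ᵥ A *ᵥ y = star x ⬝ᵥ y := by
      rw [dotProduct_mulVec, hxA]
    have h2 : star u ⬝ᵥ A *ᵥ u = star u ⬝ᵥ x := by rw [hAu]
    have h2' : star y ⬝ᵥ A *ᵥ u = star y ⬝ᵥ x := by rw [hAu]
    simp only [star_sub, sub_dotProduct, dotProduct_sub, mulVec_sub, sub_mulVec]
    rw [h1, h2, h2', hBy]
    ring
  have h3 : 0 ≤ (star (u - y) ⬝ᵥ A *ᵥ (u - y)).re := hA.posSemidef.re_dotProduct_nonneg _
  have h4 : 0 ≤ (star y ⬝ᵥ (B - A) *ᵥ y).re := hAB.re_dotProduct_nonneg _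
  have h5 : (star u ⬝ᵥ x).re = (star x ⬝ᵥ u).re := by
    simp [star_dotProduct u x]
  have := congrArg Complex.re key
  simp only [Complex.sub_re, Complex.add_re] at this
  linarith [h5 ▸ this]

lemma det_add_vecMulVec {A : Matrix n n ℂ} (hA : IsUnit A.det) (w v : n → ℂ) :
    (A + vecMulVec w v).det = A.det * (1 + v ⬝ᵥ A⁻¹ *ᵥ w) := by
  rw [vecMulVec_eq Unit, det_add_replicateCol_mul_replicateRow hA]
  congr 1
  rw [Matrix.mul_assoc, ← replicateCol_mulVec, det_unique]
  simp [replicateRow_mul_replicateCol_apply]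

lemma det_re_ratio_le {P Q : Matrix n n ℂ} (hP : P.PosDef) (hQ : Q.PosSemidef)
    {t : ℝ} (ht : 0 ≤ t) (v : n → ℂ) :
    ((P + Q + (t : ℂ) • vecMulVec v (star v)).det).re * (P.det).re ≤
      ((P + (t : ℂ) • vecMulVec v (star v)).det).re * ((P + Q).det).re := by
  have hPQ : (P + Q).PosDef := hP.add_posSemidef hQ
  have key : ∀ (A : Matrix n n ℂ), A.PosDef →
      ((A + (t : ℂ) • vecMulVec v (star v)).det).re
        = A.det.re * (1 + t * (star v ⬝ᵥ A⁻¹ *ᵥ v).re) := by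
    intro A hA
    have e1 : (t : ℂ) • vecMulVec v (star v) = vecMulVec ((t : ℂ) • v) (star v) := by
      ext i j; simp [vecMulVec]; ring
    rw [e1, det_add_vecMulVec hA.det_pos.ne'.isUnit, mulVec_smul, dotProduct_smul]
    have him := det_im_zero hA
    simp [Complex.mul_re, Complex.add_re, Complex.add_im, Complex.mul_im, him,
      smul_eq_mul]
  rw [key _ hP, key _ hPQ]
  have hq := inv_quad_anti hP hPQ (by simpa using hQ) v
  have h1 : 0 < P.det.re := det_re_pos hP
  have h2 : 0 < (P + Q).det.re := det_re_pos hPQ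
  nlinarith [mul_pos h1 h2, mul_le_mul_of_nonneg_left hq ht]

end Aux

section Gram
variable {M K : ℕ} (h : Fin K → Fin M → ℂ) (c : ℝ)

lemma gram_posSemidef (T : Finset (Fin K)) : (gram h T).PosSemidef := by
  unfold _root_.gram
  refine Finset.sum_induction _ _ (fun a b ha hb => ha.add hb) Matrix.PosSemidef.zero ?_
  intro k _
  have e : vecMulVec (h k) (star (h k)) = replicateCol Unit (h k) * (replicateCol Unit (h k))ᴴ := by
    rw [vecMulVec_eq Unit, conjTranspose_replicateCol]
  rw [e]
  exact posSemidef_self_mul_conjTranspose _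

lemma gram_union {S T : Finset (Fin K)} (hST : Disjoint S T) :
    gram h (S ∪ T) = gram h S + gram h T := by
  unfold _root_.gram
  exact Finset.sum_union hST

noncomputable def FF {M K : ℕ} (h : Fin K → Fin M → ℂ) (c : ℝ) (T : Finset (Fin K)) : ℝ :=
  ((1 + (c : ℂ) • gram h T).det).re

lemma onePlus_posDef {A : Matrix (Fin M) (Fin M) ℂ} (hA : A.PosSemidef) :
    (1 + A).PosDef :=
  Matrix.PosDef.one.add_posSemidef hA

lemma FF_pos (hc : 0 ≤ c) (T : Finset (Fin K)) : 0 < FF h c T :=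
  det_re_pos (onePlus_posDef (smul_posSemidef hc (gram_posSemidef h T)))

lemma rate_eq (hc : 0 ≤ c) {S T : Finset (Fin K)} (hST : Disjoint S T) :
    rate h c S T = Real.logb 2 (FF h c (S ∪ T)) - Real.logb 2 (FF h c T) := by
  unfold rate
  rw [show gram h S + gram h T = gram h (S ∪ T) from (gram_union h hST).symm]
  exact Real.logb_div (FF_pos h c hc _).ne' (FF_pos h c hc _).ne'

lemma rate_singleton_anti (hc : 0 < c) {k : Fin K} {T T' : Finset (Fin K)}
    (hsub : T ⊆ T') :
    rate h c {k} T' ≤ rate h c {k} T := by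
  unfold rate
  set v := h k with hv
  have hg1 : gram h ({k} : Finset (Fin K)) = vecMulVec v (star v) := by
    simp [_root_.gram, hv]
  have hsd : gram h T' = gram h T + gram h (T' \ T) := by
    rw [← gram_union h Finset.disjoint_sdiff, Finset.union_sdiff_of_subset hsub]
  set P := 1 + (c : ℂ) • gram h T with hPdef
  set Q := (c : ℂ) • gram h (T' \ T) with hQdef
  have hP : P.PosDef := onePlus_posDef (smul_posSemidef hc.le (gram_posSemidef h T))
  have hQ : Q.PosSemidef := smul_posSemidef hc.le (gram_posSemidef h _)
  have hR : ((c : ℂ) • vecMulVec v (star v)).PosSemidef := by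
    rw [← hg1]; exact smul_posSemidef hc.le (gram_posSemidef h _)
  have hPQ : (P + Q).PosDef := hP.add_posSemidef hQ
  have eT' : 1 + (c : ℂ) • gram h T' = P + Q := by
    rw [hsd, smul_add, hPdef, hQdef, add_assoc]
  have eNum' : 1 + (c : ℂ) • (gram h ({k} : Finset (Fin K)) + gram h T')
      = (P + Q) + (c : ℂ) • vecMulVec v (star v) := by
    rw [hg1, hsd, smul_add, smul_add, hPdef, hQdef]; abel
  have eNum : 1 + (c : ℂ) • (gram h ({k} : Finset (Fin K)) + gram h T)
      = P + (c : ℂ) • vecMulVec v (star v) := by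
    rw [hg1, smul_add, hPdef]; abel
  rw [eT', eNum', eNum]
  have hN1 : (P + Q + (c : ℂ) • vecMulVec v (star v)).PosDef := hPQ.add_posSemidef hR
  have hN2 : (P + (c : ℂ) • vecMulVec v (star v)).PosDef := hP.add_posSemidef hR
  refine (Real.logb_le_logb one_lt_two
    (div_pos (det_re_pos hN1) (det_re_pos hPQ))
    (div_pos (det_re_pos hN2) (det_re_pos hP))).mpr ?_
  rw [div_le_div_iff₀ (det_re_pos hPQ) (det_re_pos hP)]
  exact det_re_ratio_le hP hQ hc.le v

end Gram

section Main
variable {M K : ℕ} (h : Fin K → Fin M → ℂ) {c : ℝ}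

lemma telescope (hc : 0 < c) (r : Fin K → ℝ) (e : Equiv.Perm (Fin K)) (m : ℕ)
    (hdec : ∀ u : Fin K, (u : ℕ) < m →
      r (e u) ≤ rate h c {e u} ((Finset.Ioi u).image e))
    (V : Finset (Fin K)) :
    (∀ u ∈ V, (u : ℕ) < m) →
      ∑ u ∈ V, r (e u) ≤
        Real.logb 2 (FF h c (V.image e ∪
            (Finset.univ \ (Finset.univ.filter (fun u : Fin K => (u : ℕ) < m)).image e)))
          - Real.logb 2 (FF h c
            (Finset.univ \ (Finset.univ.filter (fun u : Fin K => (u : ℕ) < m)).image e)) := by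
  set Dset := (Finset.univ.filter (fun u : Fin K => (u : ℕ) < m)).image e with hD
  set Shat := Finset.univ \ Dset with hS
  induction V using Finset.induction_on_min with
  | empty => intro _; simp
  | insert a V hlt IH =>
    intro hmem
    have ham : (a : ℕ) < m := hmem a (Finset.mem_insert_self a V)
    have haV : a ∉ V := fun hx => lt_irrefl a (hlt a hx)
    have hVm : ∀ u ∈ V, (u : ℕ) < m := fun u hu => hmem u (Finset.mem_insert_of_mem hu)
    have IH' := IH hVm
    rw [Finset.sum_insert haV]
    have haD : e a ∈ Dset := by
      rw [hD]
      exact Finset.mem_image_of_mem e (Finset.mem_filter.mpr ⟨Finset.mem_univ a, ham⟩)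
    have hsub : V.image e ∪ Shat ⊆ (Finset.Ioi a).image e := by
      apply Finset.union_subset
      · exact Finset.image_subset_image (fun x hx => Finset.mem_Ioi.mpr (hlt x hx))
      · intro x hx
        rw [hS, Finset.mem_sdiff] at hx
        obtain ⟨-, hxD⟩ := hx
        refine Finset.mem_image.mpr ⟨e.symm x, Finset.mem_Ioi.mpr ?_, e.apply_symm_apply x⟩
        have hxm : ¬ ((e.symm x : Fin K) : ℕ) < m := fun hlt' => hxD (by
          rw [hD]
          exact Finset.mem_image.mpr ⟨e.symm x, Finset.mem_filter.mpr
            ⟨Finset.mem_univ _, hlt'⟩, e.apply_symm_apply x⟩)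
        rw [Fin.lt_def]
        omega
    have heaW : e a ∉ V.image e ∪ Shat := by
      rw [Finset.mem_union]
      rintro (hx | hx)
      · obtain ⟨u, hu, hux⟩ := Finset.mem_image.mp hx
        exact haV (by rwa [e.injective hux] at hu)
      · rw [hS, Finset.mem_sdiff] at hx
        exact hx.2 haD
    have step1 := hdec a ham
    have step2 := rate_singleton_anti h c hc hsub (k := e a)
    have step3 : rate h c {e a} (V.image e ∪ Shat)
        = Real.logb 2 (FF h c ({e a} ∪ (V.image e ∪ Shat)))
          - Real.logb 2 (FF h c (V.image e ∪ Shat)) :=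
      rate_eq h c hc.le (Finset.disjoint_singleton_left.mpr heaW)
    have step4 : {e a} ∪ (V.image e ∪ Shat) = (insert a V).image e ∪ Shat := by
      ext x
      simp [Finset.image_insert, or_assoc]
    rw [step4] at step3
    have hWpos := FF_pos h c hc.le (V.image e ∪ Shat)
    linarith
end Main

/-- Any set of users decodable by successive interference cancellation in some order lies in
the capacity region of the corresponding multiple-access channel with the remaining users
treated as interference: if, for a decoding order `e`, the SIC decodability condition
`r (e u) ≤ R_{e u}^{T_u}` (with `T_u = {e v : v > u}`) holds for all positions `u < m`, then
the decoded set `D = {e u : u < m}` satisfies condition (9) relative to the outage set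
`Ŝ = univ ∖ D`: for every `S ⊆ D`, `∑_{k ∈ S} r k ≤ R_S^{Ŝ}`. -/
theorem stmt_10 {M K : ℕ} (hM : 0 < M) (hK : 0 < K) (h : Fin K → Fin M → ℂ)
    (c : ℝ) (hc : 0 < c) (r : Fin K → ℝ) (hr : ∀ k, 0 < r k)
    (e : Equiv.Perm (Fin K)) (m : ℕ) (hm : m ≤ K)
    (hdec : ∀ u : Fin K, (u : ℕ) < m →
      r (e u) ≤ rate h c {e u} ((Finset.Ioi u).image e)) :
    ∀ S ⊆ (Finset.univ.filter (fun u : Fin K => (u : ℕ) < m)).image e,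
      ∑ k ∈ S, r k ≤
        rate h c S
          (Finset.univ \ (Finset.univ.filter (fun u : Fin K => (u : ℕ) < m)).image e) := by
  intro S hS
  have hVe : (S.image e.symm).image e = S := by
    rw [Finset.image_image]
    have : (⇑e ∘ ⇑e.symm) = id := by
      funext x; simp
    rw [this, Finset.image_id]
  have hVm : ∀ u ∈ S.image e.symm, (u : ℕ) < m := by
    intro u hu
    obtain ⟨k, hk, rfl⟩ := Finset.mem_image.mp hu
    obtain ⟨u', hu', rfl⟩ := Finset.mem_image.mp (hS hk)
    rw [e.symm_apply_apply]
    exact (Finset.mem_filter.mp hu').2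
  have hsum : ∑ u ∈ S.image e.symm, r (e u) = ∑ k ∈ S, r k := by
    rw [Finset.sum_image (fun x _ y _ hxy => e.symm.injective hxy)]
    exact Finset.sum_congr rfl fun k _ => by rw [e.apply_symm_apply]
  have hkey := telescope h hc r e m hdec (S.image e.symm) hVm
  rw [hVe, hsum] at hkey
  have hrate : rate h c S
        (Finset.univ \ (Finset.univ.filter (fun u : Fin K => (u : ℕ) < m)).image e)
      = Real.logb 2 (FF h c (S ∪
          (Finset.univ \ (Finset.univ.filter (fun u : Fin K => (u : ℕ) < m)).image e)))
        - Real.logb 2 (FF h c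
          (Finset.univ \ (Finset.univ.filter (fun u : Fin K => (u : ℕ) < m)).image e)) :=
    rate_eq h c hc.le (Finset.disjoint_sdiff.mono_left hS)
  rw [hrate]
  exact hkey
end

section
/- Fix positive integers M and K, complex column vectors h_1,…,h_K ∈ ℂ^M, a real constant c > 0, and target rates r_1,…,r_K > 0. Let Ŝ ⊆ {1,…,K} and let l ∈ {1,…,K} ∖ Ŝ satisfy r_l > R_l^{Ŝ}. Then for every set D ⊆ {1,…,K} ∖ Ŝ with l ∈ D, the joint-decodability condition fails for D: there exists S ⊆ D (namely S = {l}) with Σ_{k∈S} r_k > R_S^{{1,…,K}∖D}. In particular, if the users in Ŝ are in outage (their interference cannot be cancelled), then user l is necessarily in outage as well. -/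
open Matrix BigOperators

open ComplexOrder

section Aux

variable {n : Type*} [Fintype n] [DecidableEq n]

lemma psd_vecMulVec (v : n → ℂ) : (Matrix.vecMulVec v (star v)).PosSemidef := by
  rw [Matrix.vecMulVec_eq Unit, ← Matrix.conjTranspose_replicateCol]
  exact Matrix.posSemidef_self_mul_conjTranspose _

lemma psd_smul {P : Matrix n n ℂ} (hP : P.PosSemidef) {c : ℝ} (hc : 0 ≤ c) :
    ((c : ℂ) • P).PosSemidef := by
  refine Matrix.PosSemidef.of_dotProduct_mulVec_nonneg ?_ ?_
  · unfold Matrix.IsHermitian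
    rw [Matrix.conjTranspose_smul, hP.1.eq]
    simp
  · intro x
    rw [Matrix.smul_mulVec, dotProduct_smul, smul_eq_mul]
    exact mul_nonneg (by exact_mod_cast hc) (hP.dotProduct_mulVec_nonneg x)

lemma quad_inv_antitone {A B : Matrix n n ℂ} (hA : A.PosDef) (hB : B.PosDef)
    (hBA : (B - A).PosSemidef) (x : n → ℂ) :
    star x ⬝ᵥ B⁻¹ *ᵥ x ≤ star x ⬝ᵥ A⁻¹ *ᵥ x := by
  set u := A⁻¹ *ᵥ x with hu
  set y := B⁻¹ *ᵥ x with hy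
  have hAu : A *ᵥ u = x := by
    rw [hu, Matrix.mulVec_mulVec, Matrix.mul_nonsing_inv _ hA.det_pos.ne'.isUnit,
      Matrix.one_mulVec]
  have hBy : B *ᵥ y = x := by
    rw [hy, Matrix.mulVec_mulVec, Matrix.mul_nonsing_inv _ hB.det_pos.ne'.isUnit,
      Matrix.one_mulVec]
  have hconj : ∀ z : ℂ, 0 ≤ z → (starRingEnd ℂ) z = z := fun z hz =>
    Complex.conj_eq_iff_im.2 ((Complex.le_def.1 hz).2.symm.trans rfl)
  have herm : star u ⬝ᵥ A *ᵥ y = star (star y ⬝ᵥ x) := by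
    rw [← hAu, star_dotProduct]
    congr 1
    rw [Matrix.star_mulVec, hA.1.eq, ← Matrix.dotProduct_mulVec]
  have e1 : 0 ≤ star (u - y) ⬝ᵥ A *ᵥ (u - y) := hA.posSemidef.dotProduct_mulVec_nonneg _
  have e2 : 0 ≤ star y ⬝ᵥ (B - A) *ᵥ y := hBA.dotProduct_mulVec_nonneg _
  have expand : star (u - y) ⬝ᵥ A *ᵥ (u - y) + star y ⬝ᵥ (B - A) *ᵥ y
      = star u ⬝ᵥ x - star (star y ⬝ᵥ x) := by
    rw [Matrix.mulVec_sub, Matrix.sub_mulVec, hAu, hBy]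
    simp only [star_sub, sub_dotProduct, dotProduct_sub, herm]
    ring
  have hsum : 0 ≤ star u ⬝ᵥ x - star (star y ⬝ᵥ x) := expand ▸ add_nonneg e1 e2
  have hLHS : star x ⬝ᵥ y = star (star y ⬝ᵥ x) := star_dotProduct _ _
  have hRHS : star x ⬝ᵥ u = star (star u ⬝ᵥ x) := star_dotProduct _ _
  have hRpos : 0 ≤ star x ⬝ᵥ u := hA.inv.posSemidef.dotProduct_mulVec_nonneg x
  calc star x ⬝ᵥ y = star (star y ⬝ᵥ x) := hLHS
    _ ≤ star u ⬝ᵥ x := sub_nonneg.mp hsum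
    _ = star (star x ⬝ᵥ u) := by rw [hRHS, star_star]
    _ = star x ⬝ᵥ u := hconj _ hRpos

lemma det_add_rank_one {A : Matrix n n ℂ} (hA : A.PosDef) (c : ℝ) (v : n → ℂ) :
    (A + (c : ℂ) • Matrix.vecMulVec v (star v)).det
      = A.det * (1 + (c : ℂ) * (star v ⬝ᵥ A⁻¹ *ᵥ v)) := by
  have h1 : (c : ℂ) • Matrix.vecMulVec v (star v)
      = Matrix.replicateCol Unit v * Matrix.replicateRow Unit ((c : ℂ) • star v) := by
    rw [← Matrix.vecMulVec_eq]
    ext i j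
    simp [Matrix.vecMulVec_apply]
    ring
  rw [h1, Matrix.det_add_replicateCol_mul_replicateRow hA.det_pos.ne'.isUnit]
  congr 1
  rw [det_unique]
  simp [Matrix.mul_apply, Matrix.mulVec, dotProduct, Finset.mul_sum, Finset.sum_mul]
  rw [Finset.sum_comm]
  refine Finset.sum_congr rfl fun i _ => Finset.sum_congr rfl fun j _ => by ring

end Aux

lemma gram_psd {M K : ℕ} (h : Fin K → Fin M → ℂ) (T : Finset (Fin K)) :
    (gram h T).PosSemidef := by
  refine Finset.sum_induction _ _ (fun a b ha hb => ha.add hb) Matrix.PosSemidef.zero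
    (fun k _ => psd_vecMulVec _)

lemma onePlus_posDef_s11 {M K : ℕ} (h : Fin K → Fin M → ℂ) {c : ℝ} (hc : 0 < c)
    (T : Finset (Fin K)) : (1 + (c : ℂ) • gram h T).PosDef :=
  Matrix.PosDef.add_posSemidef Matrix.PosDef.one (psd_smul (gram_psd h T) hc.le)

lemma rate_singleton {M K : ℕ} (h : Fin K → Fin M → ℂ) {c : ℝ} (hc : 0 < c)
    (l : Fin K) (T : Finset (Fin K)) :
    rate h c {l} T = Real.logb 2
      (1 + c * (star (h l) ⬝ᵥ (1 + (c : ℂ) • gram h T)⁻¹ *ᵥ h l).re) := by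
  set A := 1 + (c : ℂ) • gram h T with hAdef
  have hA : A.PosDef := onePlus_posDef_s11 h hc T
  have hre : 1 + (c : ℂ) • (gram h {l} + gram h T)
      = A + (c : ℂ) • Matrix.vecMulVec (h l) (star (h l)) := by
    have : gram h {l} = Matrix.vecMulVec (h l) (star (h l)) := Finset.sum_singleton _ _
    rw [this, hAdef, smul_add]
    abel
  rw [rate, hre, det_add_rank_one hA c (h l), ← hAdef]
  set q := star (h l) ⬝ᵥ A⁻¹ *ᵥ h l with hqdef
  have hq : 0 ≤ q := hA.inv.posSemidef.dotProduct_mulVec_nonneg _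
  have hqim : q.im = 0 := ((Complex.le_def.1 hq).2).symm
  have hdet : 0 < A.det := hA.det_pos
  have hdetim : A.det.im = 0 := ((Complex.le_def.1 hdet.le).2).symm
  have hdetre : 0 < A.det.re := (Complex.lt_def.1 hdet).1
  have hmul : (A.det * (1 + (c : ℂ) * q)).re = A.det.re * (1 + c * q.re) := by
    rw [Complex.mul_re, hdetim]
    simp [Complex.add_re, Complex.mul_re, Complex.ofReal_re, Complex.ofReal_im, hqim]
  rw [hmul, mul_div_cancel_left₀ _ hdetre.ne']

lemma rate_singleton_mono {M K : ℕ} (h : Fin K → Fin M → ℂ) {c : ℝ} (hc : 0 < c)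
    (l : Fin K) {T T' : Finset (Fin K)} (hTT' : T ⊆ T') :
    rate h c {l} T' ≤ rate h c {l} T := by
  rw [rate_singleton h hc, rate_singleton h hc]
  set A := 1 + (c : ℂ) • gram h T with hAdef
  set B := 1 + (c : ℂ) • gram h T' with hBdef
  have hA : A.PosDef := onePlus_posDef_s11 h hc T
  have hB : B.PosDef := onePlus_posDef_s11 h hc T'
  have hdiff : B - A = (c : ℂ) • gram h (T' \ T) := by
    rw [hAdef, hBdef]
    have : gram h (T' \ T) + gram h T = gram h T' := Finset.sum_sdiff hTT'
    rw [← this, smul_add]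
    abel
  have hBA : (B - A).PosSemidef := hdiff ▸ psd_smul (gram_psd h _) hc.le
  have hle : star (h l) ⬝ᵥ B⁻¹ *ᵥ h l ≤ star (h l) ⬝ᵥ A⁻¹ *ᵥ h l :=
    quad_inv_antitone hA hB hBA (h l)
  have hlere : (star (h l) ⬝ᵥ B⁻¹ *ᵥ h l).re ≤ (star (h l) ⬝ᵥ A⁻¹ *ᵥ h l).re :=
    (Complex.le_def.1 hle).1
  have hpos : 0 ≤ (star (h l) ⬝ᵥ B⁻¹ *ᵥ h l).re :=
    (Complex.le_def.1 (hB.inv.posSemidef.dotProduct_mulVec_nonneg (h l))).1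
  refine Real.logb_le_logb_of_le one_lt_two (by nlinarith) (by nlinarith)

/-- Correctness of the PruneAircraft step of the Single Successive Algorithm: if user `l`
(outside the outage set `Ŝ`) already fails at rate `r l` under the interference of `Ŝ` alone
(`r l > R_l^{Ŝ}`), then every candidate decodable set `D ⊆ univ ∖ Ŝ` containing `l` fails the
joint-decodability condition (9): some `S ⊆ D` (namely `S = {l}`) has
`∑_{k ∈ S} r k > R_S^{univ ∖ D}`. -/
theorem stmt_11 {M K : ℕ} (hM : 0 < M) (hK : 0 < K) (h : Fin K → Fin M → ℂ)
    (c : ℝ) (hc : 0 < c) (r : Fin K → ℝ) (hr : ∀ k, 0 < r k)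
    (Sh : Finset (Fin K)) (l : Fin K) (hl : l ∉ Sh)
    (hout : r l > rate h c {l} Sh) :
    ∀ D ⊆ Finset.univ \ Sh, l ∈ D →
      ∃ S ⊆ D, ∑ k ∈ S, r k > rate h c S (Finset.univ \ D) := by
  intro D hD hlD
  refine ⟨{l}, Finset.singleton_subset_iff.2 hlD, ?_⟩
  rw [Finset.sum_singleton]
  have hsub : Sh ⊆ Finset.univ \ D := by
    intro x hx
    refine Finset.mem_sdiff.2 ⟨Finset.mem_univ _, fun hxD => ?_⟩
    exact (Finset.mem_sdiff.1 (hD hxD)).2 hx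
  exact lt_of_le_of_lt (rate_singleton_mono h hc l hsub) hout
end
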